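/- Let n ≥ 3 and let Δ be a boomerang subgroup of SL_n(ℤ). Suppose there exist indices i ≠ j and a nonzero integer r with e_{i,j}^r ∈ Δ, where e_{i,j}^r = I + r·E_{i,j}. Then for every pair of indices i' ≠ j' there exists a nonzero integer r' with e_{i',j'}^{r'} ∈ Δ. -/

import Mathlib

/-- The conjugation action of `γ` on subgroups: `Δ ↦ γ Δ γ⁻¹`. -/
def conjSubgroup {Γ : Type*} [Group Γ] (γ : Γ) (Δ : Subgroup Γ) : Subgroup Γ :=
  Subgroup.map (MulAut.conj γ).toMonoidHom Δ

/-- The Chabauty topology on `Subgroup Γ`: induced from the product of discrete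
topologies on `Γ → Prop` via the membership indicator. -/
def chabautyTopology (Γ : Type*) [Group Γ] : TopologicalSpace (Subgroup Γ) :=
  TopologicalSpace.induced (fun (Δ : Subgroup Γ) (g : Γ) => g ∈ Δ)
    (@Pi.topologicalSpace Γ (fun _ => Prop) (fun _ => ⊥))

/-- `γ` is a recurrent direction for `Δ`: every Chabauty-open neighbourhood `O` of `Δ`
contains `γ^n Δ γ^{-n}` for some `n ≥ 1`. -/
def IsRecurrentDirection {Γ : Type*} [Group Γ] (γ : Γ) (Δ : Subgroup Γ) : Prop :=
  ∀ O : Set (Subgroup Γ), (chabautyTopology Γ).IsOpen O → Δ ∈ O →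
    ∃ n : ℕ, 1 ≤ n ∧ conjSubgroup (γ ^ n) Δ ∈ O

/-- `Δ` is a boomerang subgroup if every `γ` is a recurrent direction for it. -/
def IsBoomerang {Γ : Type*} [Group Γ] (Δ : Subgroup Γ) : Prop :=
  ∀ γ : Γ, IsRecurrentDirection γ Δ

open Matrix

section Aux

variable {n : ℕ}

/-- The elementary matrix `e_{i,j}^c` as an element of `SL_n(ℤ)`. -/
def Tsl (i j : Fin n) (h : i ≠ j) (c : ℤ) : Matrix.SpecialLinearGroup (Fin n) ℤ :=
  ⟨Matrix.transvection i j c, Matrix.det_transvection_of_ne i j h c⟩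

lemma Tsl_mul (i j : Fin n) (h : i ≠ j) (c d : ℤ) :
    Tsl i j h c * Tsl i j h d = Tsl i j h (c + d) := by
  apply Subtype.ext
  exact Matrix.transvection_mul_transvection_same (R := ℤ) _ _ h c d

lemma Tsl_pow (i j : Fin n) (h : i ≠ j) (c : ℤ) (m : ℕ) :
    (Tsl i j h c) ^ m = Tsl i j h (m * c) := by
  induction m with
  | zero => apply Subtype.ext; rw [pow_zero]; simp [Tsl]
  | succ k ih =>
    rw [pow_succ, ih, Tsl_mul]
    congr 1
    push_cast
    ring

/-- The column-move conjugation identity. -/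
lemma col_identity (i j k : Fin n) (hij : i ≠ j) (hjk : j ≠ k) (hik : i ≠ k) (r m : ℤ) :
    Tsl i j hij r * Tsl j k hjk m =
      Tsl j k hjk m * (Tsl i j hij r * Tsl i k hik (r * m)) := by
  apply Subtype.ext
  show (Tsl i j hij r).val * _ = _ * ((Tsl i j hij r).val * _)
  simp only [Tsl, Matrix.transvection]
  simp only [mul_add, add_mul, one_mul, mul_one,
    Matrix.single_mul_single_same, Matrix.single_mul_single_of_ne,
    hij, hjk, hik, hij.symm, hjk.symm, hik.symm, Ne, not_false_iff, add_zero, zero_add]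
  abel

/-- The row-move conjugation identity. -/
lemma row_identity (i j k : Fin n) (hij : i ≠ j) (hki : k ≠ i) (hkj : k ≠ j) (r m : ℤ) :
    Tsl i j hij r * Tsl k i hki m =
      Tsl k i hki m * (Tsl i j hij r * Tsl k j hkj (-(m * r))) := by
  apply Subtype.ext
  show (Tsl i j hij r).val * _ = _ * ((Tsl i j hij r).val * _)
  simp only [Tsl, Matrix.transvection]
  simp only [mul_add, add_mul, one_mul, mul_one,
    Matrix.single_mul_single_same, Matrix.single_mul_single_of_ne,
    hij, hki, hkj, hij.symm, hki.symm, hkj.symm, Ne, not_false_iff, add_zero, zero_add]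
  have hneg : (single k j (-(m * r)) : Matrix (Fin n) (Fin n) ℤ)
      = -single k j (m * r) := by
    rw [eq_neg_iff_add_eq_zero, ← Matrix.single_add]
    simp
  rw [hneg]
  abel

lemma chab_open_mem {Γ : Type*} [Group Γ] (δ : Γ) :
    (chabautyTopology Γ).IsOpen {H : Subgroup Γ | δ ∈ H} := by
  letI : TopologicalSpace Prop := ⊥
  haveI : DiscreteTopology Prop := ⟨rfl⟩
  refine ⟨(fun p : Γ → Prop => p δ) ⁻¹' {q : Prop | q}, ?_, rfl⟩
  exact (continuous_apply δ).isOpen_preimage _ (isOpen_discrete _)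

lemma boomerang_conj {Γ : Type*} [Group Γ] (Δ : Subgroup Γ) (hΔ : IsBoomerang Δ)
    (γ δ : Γ) (hδ : δ ∈ Δ) : ∃ m : ℕ, 1 ≤ m ∧ (γ ^ m)⁻¹ * δ * γ ^ m ∈ Δ := by
  obtain ⟨m, hm, hmem⟩ := hΔ γ {H : Subgroup Γ | δ ∈ H} (chab_open_mem δ) hδ
  obtain ⟨x, hx, hxe⟩ := hmem
  refine ⟨m, hm, ?_⟩
  have hx' : x = (γ ^ m)⁻¹ * δ * γ ^ m := by
    have h2 : γ ^ m * x * (γ ^ m)⁻¹ = δ := hxe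
    group
    rw [← h2]
    group
  rwa [← hx']

/-- `good Δ a b`: `Δ` contains a nontrivial elementary matrix at position `(a,b)`. -/
def good (Δ : Subgroup (Matrix.SpecialLinearGroup (Fin n) ℤ)) (a b : Fin n) : Prop :=
  ∃ h : a ≠ b, ∃ s : ℤ, s ≠ 0 ∧ Tsl a b h s ∈ Δ

lemma colStep (Δ : Subgroup (Matrix.SpecialLinearGroup (Fin n) ℤ)) (hΔ : IsBoomerang Δ)
    (i j k : Fin n) (hjk : j ≠ k) (hik : i ≠ k) (h : good Δ i j) : good Δ i k := by
  obtain ⟨hij, r, hr, hmem⟩ := h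
  obtain ⟨m, hm, hc⟩ := boomerang_conj Δ hΔ (Tsl j k hjk 1) (Tsl i j hij r) hmem
  have hpow : (Tsl j k hjk 1) ^ m = Tsl j k hjk (m : ℤ) := by
    rw [Tsl_pow]; ring_nf
  rw [hpow] at hc
  have hkey : (Tsl j k hjk (m : ℤ))⁻¹ * Tsl i j hij r * Tsl j k hjk (m : ℤ) =
      Tsl i j hij r * Tsl i k hik (r * m) := by
    rw [mul_assoc, col_identity i j k hij hjk hik r (m : ℤ), inv_mul_cancel_left]
  rw [hkey] at hc
  refine ⟨hik, r * m, ?_, ?_⟩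
  · exact mul_ne_zero hr (by exact_mod_cast Nat.one_le_iff_ne_zero.mp hm)
  · have := Δ.mul_mem (Δ.inv_mem hmem) hc
    rwa [inv_mul_cancel_left] at this

lemma rowStep (Δ : Subgroup (Matrix.SpecialLinearGroup (Fin n) ℤ)) (hΔ : IsBoomerang Δ)
    (i j k : Fin n) (hki : k ≠ i) (hkj : k ≠ j) (h : good Δ i j) : good Δ k j := by
  obtain ⟨hij, r, hr, hmem⟩ := h
  obtain ⟨m, hm, hc⟩ := boomerang_conj Δ hΔ (Tsl k i hki 1) (Tsl i j hij r) hmem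
  have hpow : (Tsl k i hki 1) ^ m = Tsl k i hki (m : ℤ) := by
    rw [Tsl_pow]; ring_nf
  rw [hpow] at hc
  have hkey : (Tsl k i hki (m : ℤ))⁻¹ * Tsl i j hij r * Tsl k i hki (m : ℤ) =
      Tsl i j hij r * Tsl k j hkj (-((m : ℤ) * r)) := by
    rw [mul_assoc, row_identity i j k hij hki hkj r (m : ℤ), inv_mul_cancel_left]
  rw [hkey] at hc
  refine ⟨hkj, -((m : ℤ) * r), ?_, ?_⟩
  · simp only [neg_ne_zero]
    exact mul_ne_zero (by exact_mod_cast Nat.one_le_iff_ne_zero.mp hm) hr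
  · have := Δ.mul_mem (Δ.inv_mem hmem) hc
    rwa [inv_mul_cancel_left] at this

end Aux

theorem boomerang_propagates_elementary {n : ℕ} (hn : 3 ≤ n)
    (Δ : Subgroup (Matrix.SpecialLinearGroup (Fin n) ℤ)) (hΔ : IsBoomerang Δ)
    (i j : Fin n) (hij : i ≠ j) (r : ℤ) (hr : r ≠ 0)
    (hmem : ∃ δ ∈ Δ, (δ : Matrix (Fin n) (Fin n) ℤ) = 1 + Matrix.single i j r) :
    ∀ i' j' : Fin n, i' ≠ j' → ∃ r' : ℤ, r' ≠ 0 ∧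
      ∃ δ ∈ Δ, (δ : Matrix (Fin n) (Fin n) ℤ) = 1 + Matrix.single i' j' r' := by
  -- initial `good`
  have h0 : good Δ i j := by
    obtain ⟨δ, hδ, hδe⟩ := hmem
    refine ⟨hij, r, hr, ?_⟩
    have : δ = Tsl i j hij r := Subtype.ext hδe
    rwa [← this]
  intro i' j' hij'
  -- it suffices to show `good Δ i' j'`
  suffices hgood : good Δ i' j' by
    obtain ⟨h, s, hs, hmem'⟩ := hgood
    exact ⟨s, hs, Tsl i' j' h s, hmem', rfl⟩
  -- a third index
  have hex : ∀ a b : Fin n, ∃ k : Fin n, k ≠ a ∧ k ≠ b := by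
    intro a b
    by_contra hcon
    push_neg at hcon
    have hsub : (Finset.univ : Finset (Fin n)) ⊆ {a, b} := by
      intro k _
      rcases eq_or_ne k a with h' | h'
      · simp [h']
      · simp [hcon k h']
    have h1 := Finset.card_le_card hsub
    have h2 : ({a, b} : Finset (Fin n)).card ≤ 2 :=
      (Finset.card_insert_le _ _).trans (by simp)
    simp only [Finset.card_univ, Fintype.card_fin] at h1
    omega
  rcases eq_or_ne i' i with hii | hii
  · rcases eq_or_ne j' j with hjj | hjj
    · rwa [hii, hjj]
    · subst hii
      exact colStep Δ hΔ i' j j' (Ne.symm hjj) hij' h0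
  · rcases eq_or_ne j' j with hjj | hjj
    · subst hjj
      exact rowStep Δ hΔ i j' i' hii hij' h0
    · rcases eq_or_ne i' j with hi'j | hi'j
      · subst hi'j
        rcases eq_or_ne j' i with hj'i | hj'i
        · subst hj'i
          obtain ⟨k, hki, hkj⟩ := hex j' i'
          have s1 : good Δ j' k := colStep Δ hΔ j' i' k (Ne.symm hkj) (Ne.symm hki) h0
          have s2 : good Δ i' k := rowStep Δ hΔ j' k i' (Ne.symm hij) (Ne.symm hkj) s1
          exact colStep Δ hΔ i' k j' hki hij' s2
        · have s1 : good Δ i j' := colStep Δ hΔ i i' j' hij' (Ne.symm hj'i) h0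
          exact rowStep Δ hΔ i j' i' (Ne.symm hij) hij' s1
      · rcases eq_or_ne j' i with hj'i | hj'i
        · subst hj'i
          have s1 : good Δ i' j := rowStep Δ hΔ j' j i' hii hi'j h0
          exact colStep Δ hΔ i' j j' (Ne.symm hij) hij' s1
        · have s1 : good Δ i' j := rowStep Δ hΔ i j i' hii hi'j h0
          exact colStep Δ hΔ i' j j' (Ne.symm hjj) hij' s1
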